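/- Let B be a real n×r matrix, let P be a real symmetric idempotent r×r matrix, and set L = B Bᵀ and L̂ = B P Bᵀ. Then B (I_r + P BᵀB P)⁻¹ Bᵀ = L − L̂ + L̂ (I_n + L̂)⁻¹, which also equals L − L̂ (I_n + L̂)⁻¹ L̂. -/
import Mathlib

open Matrix

lemma one_add_psd_isUnit_det' {m k : ℕ} (A : Matrix (Fin m) (Fin k) ℝ) :
    IsUnit (1 + Aᵀ * A).det := by
  have h : (1 + Aᵀ * A).PosDef := by
    have := Matrix.posSemidef_conjTranspose_mul_self A
    rw [conjTranspose_eq_transpose_of_trivial] at this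
    exact Matrix.PosDef.one.add_posSemidef this
  exact (Matrix.isUnit_iff_isUnit_det _).1 h.isUnit

lemma commute_inv' {m : ℕ} {X Y : Matrix (Fin m) (Fin m) ℝ} (hd : IsUnit X.det)
    (h : Y * X = X * Y) : Y * X⁻¹ = X⁻¹ * Y := by
  have := congrArg (fun Z => X⁻¹ * Z * X⁻¹) h
  simp only [← Matrix.mul_assoc] at this
  rw [Matrix.nonsing_inv_mul _ hd, Matrix.one_mul, Matrix.mul_assoc (X⁻¹ * Y),
    Matrix.mul_nonsing_inv _ hd, Matrix.mul_one] at this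
  exact this.symm

lemma push_through' {m k : ℕ} (A : Matrix (Fin m) (Fin k) ℝ) :
    A * (1 + Aᵀ * A)⁻¹ = (1 + A * Aᵀ)⁻¹ * A := by
  have hd1 : IsUnit (1 + Aᵀ * A).det := one_add_psd_isUnit_det' A
  have hd2 : IsUnit (1 + A * Aᵀ).det := by
    have := one_add_psd_isUnit_det' Aᵀ
    rwa [transpose_transpose] at this
  have key : (1 + A * Aᵀ) * A = A * (1 + Aᵀ * A) := by
    simp only [Matrix.add_mul, Matrix.mul_add, Matrix.one_mul, Matrix.mul_one,
      Matrix.mul_assoc]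
  have := congrArg (fun Z => (1 + A * Aᵀ)⁻¹ * Z * (1 + Aᵀ * A)⁻¹) key
  simp only [← Matrix.mul_assoc] at this
  rwa [Matrix.nonsing_inv_mul _ hd2, Matrix.one_mul, Matrix.mul_assoc ((1 + A * Aᵀ)⁻¹ * A),
    Matrix.mul_nonsing_inv _ hd1, Matrix.mul_one] at this

/-- For `L = B * Bᵀ`, `L̂ = B * P * Bᵀ` with `P` symmetric idempotent,
`B (1 + P BᵀB P)⁻¹ Bᵀ = L - L̂ + L̂ (1 + L̂)⁻¹ = L - L̂ (1 + L̂)⁻¹ L̂`. -/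
theorem leverage_score_matrix_identity {n r : ℕ} (B : Matrix (Fin n) (Fin r) ℝ)
    (P : Matrix (Fin r) (Fin r) ℝ) (hPsym : Pᵀ = P) (hPidem : P * P = P)
    (L Lhat : Matrix (Fin n) (Fin n) ℝ) (hL : L = B * Bᵀ) (hLhat : Lhat = B * P * Bᵀ) :
    B * (1 + P * Bᵀ * B * P)⁻¹ * Bᵀ = L - Lhat + Lhat * (1 + Lhat)⁻¹
    ∧ B * (1 + P * Bᵀ * B * P)⁻¹ * Bᵀ = L - Lhat * (1 + Lhat)⁻¹ * Lhat := by
  obtain ⟨A, hA⟩ : ∃ A, A = B * P := ⟨_, rfl⟩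
  have hAt : Aᵀ = P * Bᵀ := by rw [hA, transpose_mul, hPsym]
  have hM : P * Bᵀ * B * P = Aᵀ * A := by
    rw [hAt, hA]; simp only [Matrix.mul_assoc]
  have hLA : Lhat = A * Aᵀ := by
    rw [hAt, hA, hLhat]
    have h1 : B * P * (P * Bᵀ) = B * (P * P) * Bᵀ := by simp only [Matrix.mul_assoc]
    rw [h1, hPidem]
  have hdM : IsUnit (1 + Aᵀ * A).det := one_add_psd_isUnit_det' A
  have hdL : IsUnit (1 + Lhat).det := by
    have := one_add_psd_isUnit_det' Aᵀ
    rwa [transpose_transpose, ← hLA] at this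
  -- P commutes with Aᵀ * A
  have hPAA : P * (Aᵀ * A) = Aᵀ * A := by
    rw [hAt, hA]
    calc P * (P * Bᵀ * (B * P)) = (P * P) * Bᵀ * (B * P) := by
          simp only [Matrix.mul_assoc]
      _ = P * Bᵀ * (B * P) := by rw [hPidem]
  have hAAP : (Aᵀ * A) * P = Aᵀ * A := by
    rw [hAt, hA]
    calc P * Bᵀ * (B * P) * P = P * Bᵀ * (B * (P * P)) := by
          simp only [Matrix.mul_assoc]
      _ = P * Bᵀ * (B * P) := by rw [hPidem]
  have hPM : P * (1 + Aᵀ * A) = (1 + Aᵀ * A) * P := by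
    rw [Matrix.mul_add, Matrix.add_mul, Matrix.mul_one, Matrix.one_mul, hPAA, hAAP]
  have hPMinv : P * (1 + Aᵀ * A)⁻¹ = (1 + Aᵀ * A)⁻¹ * P := commute_inv' hdM hPM
  have hpush : A * (1 + Aᵀ * A)⁻¹ = (1 + Lhat)⁻¹ * A := by
    rw [hLA]; exact push_through' A
  -- key decomposition of the inverse
  have hinv : (1 + Aᵀ * A)⁻¹ = 1 - P + (1 + Aᵀ * A)⁻¹ * P := by
    have hright : (1 + Aᵀ * A) * (1 - P + (1 + Aᵀ * A)⁻¹ * P) = 1 := by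
      rw [Matrix.mul_add, Matrix.mul_sub, ← Matrix.mul_assoc,
        Matrix.mul_nonsing_inv _ hdM, Matrix.one_mul, Matrix.mul_one,
        Matrix.add_mul, Matrix.one_mul, hAAP]
      abel
    calc (1 + Aᵀ * A)⁻¹ = (1 + Aᵀ * A)⁻¹ * ((1 + Aᵀ * A) * (1 - P + (1 + Aᵀ * A)⁻¹ * P)) := by
          rw [hright, Matrix.mul_one]
      _ = 1 - P + (1 + Aᵀ * A)⁻¹ * P := by
          rw [← Matrix.mul_assoc, Matrix.nonsing_inv_mul _ hdM, Matrix.one_mul]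
  have hcomm : Lhat * (1 + Lhat)⁻¹ = (1 + Lhat)⁻¹ * Lhat :=
    commute_inv' hdL (by rw [Matrix.mul_add, Matrix.add_mul, Matrix.mul_one, Matrix.one_mul])
  have hBP : B * ((1 + Aᵀ * A)⁻¹ * P) * Bᵀ = Lhat * (1 + Lhat)⁻¹ := by
    calc B * ((1 + Aᵀ * A)⁻¹ * P) * Bᵀ = B * (P * (1 + Aᵀ * A)⁻¹) * Bᵀ := by rw [hPMinv]
      _ = (B * P) * (1 + Aᵀ * A)⁻¹ * Bᵀ := by simp only [Matrix.mul_assoc]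
      _ = A * (1 + Aᵀ * A)⁻¹ * Bᵀ := by rw [hA]
      _ = (1 + Lhat)⁻¹ * A * Bᵀ := by rw [hpush]
      _ = (1 + Lhat)⁻¹ * Lhat := by rw [hLhat, hA]; simp only [Matrix.mul_assoc]
      _ = Lhat * (1 + Lhat)⁻¹ := hcomm.symm
  have hmain : B * (1 + P * Bᵀ * B * P)⁻¹ * Bᵀ = L - Lhat + Lhat * (1 + Lhat)⁻¹ := by
    rw [hM, hinv]
    calc B * (1 - P + (1 + Aᵀ * A)⁻¹ * P) * Bᵀ
        = B * Bᵀ - B * P * Bᵀ + B * ((1 + Aᵀ * A)⁻¹ * P) * Bᵀ := by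
          rw [Matrix.mul_add, Matrix.mul_sub, Matrix.mul_one, Matrix.add_mul, Matrix.sub_mul]
      _ = L - Lhat + Lhat * (1 + Lhat)⁻¹ := by rw [← hL, ← hLhat, hBP]
  refine ⟨hmain, hmain.trans ?_⟩
  have key : Lhat - Lhat * (1 + Lhat)⁻¹ = Lhat * (1 + Lhat)⁻¹ * Lhat := by
    calc Lhat - Lhat * (1 + Lhat)⁻¹
        = Lhat * ((1 + Lhat) * (1 + Lhat)⁻¹) - Lhat * (1 + Lhat)⁻¹ := by
          rw [Matrix.mul_nonsing_inv _ hdL, Matrix.mul_one]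
      _ = Lhat * ((1 + Lhat)⁻¹ * Lhat) := by
          rw [Matrix.add_mul, Matrix.one_mul, Matrix.mul_add, ← hcomm,
            ← Matrix.mul_assoc]
          abel
      _ = Lhat * (1 + Lhat)⁻¹ * Lhat := by rw [Matrix.mul_assoc]
  calc L - Lhat + Lhat * (1 + Lhat)⁻¹ = L - (Lhat - Lhat * (1 + Lhat)⁻¹) := by abel
    _ = L - Lhat * (1 + Lhat)⁻¹ * Lhat := by rw [key]
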